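/- In the free group F₂ on {a, b}, the language L = {(a a a⁻¹)ⁿ b^(2n) : n ∈ ℕ} over Σ = {a, b, a⁻¹, b⁻¹} is a visibly pushdown language for the partition Σ_c = {a}, Σ_i = {a⁻¹, b⁻¹}, Σ_r = {b}, but the set of reduced words with the same images, r(L) = {aⁿ b^(2n) : n ∈ ℕ}, is not a visibly pushdown language for any partition of Σ. -/

import Mathlib

inductive VKind | call | internal | response
deriving DecidableEq

/-- A (nondeterministic) visibly pushdown automaton over alphabet `A`
partitioned by `kind` into call, internal and response letters. -/
structure VPA (A : Type) (kind : A → VKind) where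
  Q : Type
  Γ : Type
  [finQ : Fintype Q]
  [finΓ : Fintype Γ]
  init : Q
  accept : Set Q
  /-- transitions on call letters: push one symbol, do not inspect the stack -/
  δc : Q → A → Set (Q × Γ)
  /-- transitions on internal letters: do not inspect or modify the stack -/
  δi : Q → A → Set Q
  /-- transitions on response letters: pop the topmost stack symbol -/
  δr : Q → A → Γ → Set Q
  /-- transitions on response letters read on the empty stack (bottom symbol) -/
  δb : Q → A → Set Q

namespace VPA

variable {A : Type} {kind : A → VKind}

inductive Steps (M : VPA A kind) : M.Q × List M.Γ → List A → M.Q × List M.Γ → Prop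
  | nil (c) : Steps M c [] c
  | call {q s a q' γ w c} : kind a = .call → (q', γ) ∈ M.δc q a →
      Steps M (q', γ :: s) w c → Steps M (q, s) (a :: w) c
  | internal {q s a q' w c} : kind a = .internal → q' ∈ M.δi q a →
      Steps M (q', s) w c → Steps M (q, s) (a :: w) c
  | pop {q γ s a q' w c} : kind a = .response → q' ∈ M.δr q a γ →
      Steps M (q', s) w c → Steps M (q, γ :: s) (a :: w) c
  | popEmpty {q a q' w c} : kind a = .response → q' ∈ M.δb q a →
      Steps M (q', []) w c → Steps M (q, []) (a :: w) c

/-- A VPA accepts a word if reading it from the initial state with empty stack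
can end in an accepting state (with arbitrary stack contents). -/
def Accepts (M : VPA A kind) (w : List A) : Prop :=
  ∃ c : M.Q × List M.Γ, M.Steps (M.init, []) w c ∧ c.1 ∈ M.accept

end VPA

/-- `L` is a visibly pushdown language over the partition `kind`. -/
def IsVPL {A : Type} (kind : A → VKind) (L : Set (List A)) : Prop :=
  ∃ M : VPA A kind, L = {w | M.Accepts w}

inductive F2L | a | b | ai | bi
deriving DecidableEq

/-- Projection onto the free group F₂ = F(a,b), with `true ↦ a`, `false ↦ b`. -/
def projF2 (w : List F2L) : FreeGroup Bool :=
  (w.map (fun l => match l with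
    | F2L.a => FreeGroup.of true
    | F2L.ai => (FreeGroup.of true)⁻¹
    | F2L.b => FreeGroup.of false
    | F2L.bi => (FreeGroup.of false)⁻¹)).prod

/-- The formal inverse letter. -/
def invF2L : F2L → F2L
  | .a => .ai
  | .ai => .a
  | .b => .bi
  | .bi => .b

/-- A word is freely reduced if no letter is followed by its formal inverse. -/
def ReducedF2 (w : List F2L) : Prop :=
  List.Chain' (fun x y => y ≠ invF2L x) w

def kindF2 : F2L → VKind
  | .a => .call
  | .b => .response
  | _ => .internal

/-- The language L = {(aaa⁻¹)ⁿ b^(2n)} over {a,b,a⁻¹,b⁻¹}. -/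
def Lmix : Set (List F2L) :=
  {w | ∃ n : ℕ, w = (List.replicate n [F2L.a, F2L.a, F2L.ai]).flatten ++
    List.replicate (2 * n) F2L.b}

/-- The set of reduced words with the same images in F₂ as the words of `Lmix`. -/
def rLmix : Set (List F2L) :=
  {w | ReducedF2 w ∧ projF2 w ∈ projF2 '' Lmix}

/-! ### Auxiliary material -/

section StepsLemmas

variable {A : Type} {kind : A → VKind} {M : VPA A kind}

theorem VPA.steps_nil_eq {c c' : M.Q × List M.Γ} (h : M.Steps c [] c') : c' = c := by
  cases h; rfl

theorem VPA.steps_trans : ∀ {c cm c' w1 w2}, M.Steps c w1 cm → M.Steps cm w2 c' →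
    M.Steps c (w1 ++ w2) c' := by
  intro c cm c' w1 w2 h1 h2
  induction h1 with
  | nil => simpa using h2
  | call hk hm _ ih => exact .call hk hm (ih h2)
  | internal hk hm _ ih => exact .internal hk hm (ih h2)
  | pop hk hm _ ih => exact .pop hk hm (ih h2)
  | popEmpty hk hm _ ih => exact .popEmpty hk hm (ih h2)

theorem VPA.steps_append : ∀ {w1 w2 : List A} {c c'}, M.Steps c (w1 ++ w2) c' →
    ∃ cm, M.Steps c w1 cm ∧ M.Steps cm w2 c' := by
  intro w1
  induction w1 with
  | nil => exact fun h => ⟨_, .nil _, h⟩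
  | cons x t ih =>
    intro w2 c c' h
    cases h with
    | call hk hm hs => obtain ⟨cm, h1, h2⟩ := ih hs; exact ⟨cm, .call hk hm h1, h2⟩
    | internal hk hm hs => obtain ⟨cm, h1, h2⟩ := ih hs; exact ⟨cm, .internal hk hm h1, h2⟩
    | pop hk hm hs => obtain ⟨cm, h1, h2⟩ := ih hs; exact ⟨cm, .pop hk hm h1, h2⟩
    | popEmpty hk hm hs => obtain ⟨cm, h1, h2⟩ := ih hs; exact ⟨cm, .popEmpty hk hm h1, h2⟩

theorem VPA.steps_empty_of_nocall : ∀ {c c' w}, M.Steps c w c' →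
    (∀ x ∈ w, kind x ≠ .call) → c.2 = [] → c'.2 = [] := by
  intro c c' w h
  induction h with
  | nil => exact fun _ h => h
  | @call q s a q' γ w c hk hm _ ih =>
    intro hno _
    exact absurd hk (hno a (by simp))
  | @internal q s a q' w c hk hm _ ih =>
    intro hno hs
    exact ih (fun x hx => hno x (by simp [hx])) hs
  | @pop q γ s a q' w c hk hm _ ih =>
    intro hno hs
    simp at hs
  | @popEmpty q a q' w c hk hm _ ih =>
    intro hno _
    exact ih (fun x hx => hno x (by simp [hx])) rfl

theorem VPA.steps_of_noresp : ∀ {c c' w}, M.Steps c w c' →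
    (∀ x ∈ w, kind x ≠ .response) → ∀ t, ∃ s', M.Steps (c.1, t) w (c'.1, s') := by
  intro c c' w h
  induction h with
  | nil c => exact fun _ t => ⟨t, .nil _⟩
  | @call q s a q' γ w c hk hm _ ih =>
    intro hno t
    obtain ⟨s', hs'⟩ := ih (fun x hx => hno x (by simp [hx])) (γ :: t)
    exact ⟨s', .call hk hm hs'⟩
  | @internal q s a q' w c hk hm _ ih =>
    intro hno t
    obtain ⟨s', hs'⟩ := ih (fun x hx => hno x (by simp [hx])) t
    exact ⟨s', .internal hk hm hs'⟩
  | @pop q γ s a q' w c hk hm _ ih =>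
    intro hno t
    exact absurd hk (hno a (by simp))
  | @popEmpty q a q' w c hk hm _ ih =>
    intro hno t
    exact absurd hk (hno a (by simp))

theorem VPA.steps_pop_exact {x : A} (hx : kind x = .response) :
    ∀ (m : ℕ) {q : M.Q} {s : List M.Γ} {c'}, m ≤ s.length →
      M.Steps (q, s) (List.replicate m x) c' → c'.2 = s.drop m := by
  intro m
  induction m with
  | zero =>
    intro q s c' _ h
    rw [List.replicate_zero] at h
    cases h
    simp
  | succ m ih =>
    intro q s c' hle h
    rw [List.replicate_succ] at h
    cases h with
    | call hk _ _ => rw [hx] at hk; cases hk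
    | internal hk _ _ => rw [hx] at hk; cases hk
    | popEmpty _ _ _ => simp at hle
    | @pop _ γ s' _ _ _ _ hk hm hs =>
      have := ih (by simpa using hle) hs
      simpa using this

theorem VPA.steps_push_exact {x : A} (hx : kind x = .call) :
    ∀ (m : ℕ) {c c'}, M.Steps c (List.replicate m x) c' →
      c'.2.length = c.2.length + m := by
  intro m
  induction m with
  | zero =>
    intro c c' h
    rw [List.replicate_zero] at h
    cases h
    simp
  | succ m ih =>
    intro c c' h
    rw [List.replicate_succ] at h
    cases h with
    | internal hk _ _ => rw [hx] at hk; cases hk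
    | popEmpty hk _ _ => rw [hx] at hk; cases hk
    | pop hk _ _ => rw [hx] at hk; cases hk
    | @call q s a q' γ w c hk hm hs =>
      have := ih hs
      simp at this ⊢
      omega

end StepsLemmas

namespace FRaux

/-! ### The VPA recognising `Lmix` -/

abbrev blockL : List F2L := [F2L.a, F2L.a, F2L.ai]

inductive MQ | s0 | s1 | s2 | s3 | sb | sf
deriving DecidableEq

instance : Fintype MQ :=
  ⟨{MQ.s0, MQ.s1, MQ.s2, MQ.s3, MQ.sb, MQ.sf}, fun x => by cases x <;> simp⟩

inductive MG | bot | z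
deriving DecidableEq

instance : Fintype MG :=
  ⟨{MG.bot, MG.z}, fun x => by cases x <;> simp⟩

def mδc : MQ → F2L → Set (MQ × MG)
  | .s0, .a => {(.s1, .bot)}
  | .s1, .a => {(.s2, .z)}
  | .s3, .a => {(.s1, .z)}
  | _, _ => ∅

def mδi : MQ → F2L → Set MQ
  | .s2, .ai => {.s3}
  | _, _ => ∅

def mδr : MQ → F2L → MG → Set MQ
  | .s3, .b, .z => {.sb}
  | .s3, .b, .bot => {.sf}
  | .sb, .b, .z => {.sb}
  | .sb, .b, .bot => {.sf}
  | _, _, _ => ∅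

def MM : VPA F2L kindF2 where
  Q := MQ
  Γ := MG
  finQ := inferInstance
  finΓ := inferInstance
  init := .s0
  accept := {MQ.s0, MQ.sf}
  δc := mδc
  δi := mδi
  δr := mδr
  δb := fun _ _ => ∅

attribute [reducible] MM

def Bw : List MG → Set (List F2L)
  | [] => ∅
  | .z :: s => {w | ∃ v ∈ Bw s, w = F2L.b :: v}
  | .bot :: _ => {[F2L.b]}

def G (s : List MG) : Set (List F2L) :=
  {w | ∃ j : ℕ, ∃ v ∈ Bw s,
    w = (List.replicate j blockL).flatten ++ List.replicate (2 * j) F2L.b ++ v}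

def Lang : MQ → List MG → Set (List F2L)
  | .s0, s => {[]} ∪ {w | ∃ v ∈ G (.z :: .bot :: s), w = .a :: .a :: .ai :: v}
  | .s1, s => {w | ∃ v ∈ G (.z :: s), w = .a :: .ai :: v}
  | .s2, s => {w | ∃ v ∈ G s, w = .ai :: v}
  | .s3, s => G s
  | .sb, s => Bw s
  | .sf, _ => {[]}

lemma Gstep {v : List F2L} {s : List MG} (h : v ∈ G (.z :: .z :: s)) :
    (F2L.a :: F2L.a :: F2L.ai :: v) ∈ G s := by
  obtain ⟨j, u, hu, rfl⟩ := h
  obtain ⟨u1, hu1, rfl⟩ := hu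
  obtain ⟨u2, hu2, rfl⟩ := hu1
  refine ⟨j + 1, u2, hu2, ?_⟩
  rw [List.replicate_succ, List.flatten_cons,
    show 2 * (j + 1) = 2 * j + 2 by ring, List.replicate_add]
  simp [blockL]

lemma Gpop {w : List F2L} {s : List MG} (h : w ∈ Bw s) : F2L.b :: w ∈ G (.z :: s) := by
  exact ⟨0, F2L.b :: w, ⟨w, h, rfl⟩, by simp⟩

lemma sound : ∀ {c w c'}, MM.Steps c w c' → c'.1 ∈ MM.accept → w ∈ Lang c.1 c.2 := by
  intro c w c' h hacc
  induction h with
  | nil c =>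
    have : c.1 = MQ.s0 ∨ c.1 = MQ.sf := by
      simpa [MM, Set.mem_insert_iff] using hacc
    rcases this with h | h <;> rw [show c = (c.1, c.2) from rfl, h] <;> simp [Lang]
  | @call q s a q' γ w c hk hm hs ih =>
    have ih := ih hacc
    cases a <;> simp [kindF2] at hk
    cases q <;> simp [MM, mδc] at hm
    · -- q = s0
      obtain ⟨rfl, rfl⟩ := hm
      obtain ⟨v, hv, rfl⟩ := ih
      exact Or.inr ⟨v, hv, rfl⟩
    · -- q = s1
      obtain ⟨rfl, rfl⟩ := hm
      obtain ⟨v, hv, rfl⟩ := ih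
      exact ⟨v, hv, rfl⟩
    · -- q = s3
      obtain ⟨rfl, rfl⟩ := hm
      obtain ⟨v, hv, rfl⟩ := ih
      exact Gstep hv
  | @internal q s a q' w c hk hm hs ih =>
    have ih := ih hacc
    cases a <;> simp [kindF2] at hk <;> cases q <;> simp [MM, mδi] at hm
    subst hm
    exact ⟨w, ih, rfl⟩
  | @pop q γ s a q' w c hk hm hs ih =>
    have ih := ih hacc
    cases a <;> simp [kindF2] at hk
    cases q <;> cases γ <;> simp [MM, mδr] at hm <;> subst hm
    · -- s3, bot → sf
      simp only [Lang, Set.mem_singleton_iff] at ih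
      subst ih
      exact ⟨0, [F2L.b], by simp [Bw], by simp⟩
    · -- s3, z → sb
      exact Gpop ih
    · -- sb, bot → sf
      simp only [Lang, Set.mem_singleton_iff] at ih
      subst ih
      simp [Lang, Bw]
    · -- sb, z → sb
      exact ⟨w, ih, rfl⟩
  | @popEmpty q a q' w c hk hm hs ih =>
    simp [MM] at hm

lemma stepsBw : ∀ (k : ℕ) (s : List MG),
    MM.Steps (MQ.sb, List.replicate k MG.z ++ MG.bot :: s)
      (List.replicate (k + 1) F2L.b) (MQ.sf, s) := by
  intro k
  induction k with
  | zero =>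
    intro s
    have h0 : MM.Steps (MQ.sb, List.replicate 0 MG.z ++ MG.bot :: s) [F2L.b] (MQ.sf, s) :=
      .pop (q' := MQ.sf) rfl (by simp [MM, mδr]) (.nil _)
    simpa using h0
  | succ k ih =>
    intro s
    rw [List.replicate_succ, show (k+1+1) = (k+1)+1 from rfl, List.replicate_succ (n := k+1)]
    exact .pop (q' := MQ.sb) rfl (by simp [MM, mδr]) (by simpa using ih s)

lemma steps3b : ∀ (k : ℕ) (s : List MG),
    MM.Steps (MQ.s3, List.replicate k MG.z ++ MG.bot :: s)
      (List.replicate (k + 1) F2L.b) (MQ.sf, s) := by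
  intro k s
  cases k with
  | zero =>
    have h0 : MM.Steps (MQ.s3, List.replicate 0 MG.z ++ MG.bot :: s) [F2L.b] (MQ.sf, s) :=
      .pop (q' := MQ.sf) rfl (by simp [MM, mδr]) (.nil _)
    simpa using h0
  | succ k =>
    rw [List.replicate_succ, List.replicate_succ (n := k+1)]
    exact .pop (q' := MQ.sb) rfl (by simp [MM, mδr]) (by simpa using stepsBw k s)

lemma stepsBlocks : ∀ (j k : ℕ) (s : List MG),
    MM.Steps (MQ.s3, List.replicate k MG.z ++ MG.bot :: s)
      ((List.replicate j blockL).flatten ++ List.replicate (2 * j + k + 1) F2L.b)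
      (MQ.sf, s) := by
  intro j
  induction j with
  | zero => intro k s; simpa using steps3b k s
  | succ j ih =>
    intro k s
    rw [List.replicate_succ, List.flatten_cons,
      show 2 * (j + 1) + k + 1 = 2 * j + (k + 2) + 1 by ring]
    have h3 := ih (k + 2) s
    refine .call (q' := MQ.s1) (γ := MG.z) rfl (by simp [MM, mδc])
      (.call (q' := MQ.s2) (γ := MG.z) rfl (by simp [MM, mδc])
      (.internal (q' := MQ.s3) rfl (by simp [MM, mδi]) ?_))
    rw [show (MG.z :: MG.z :: (List.replicate k MG.z ++ MG.bot :: s))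
        = List.replicate (k + 2) MG.z ++ MG.bot :: s by
      simp [List.replicate_succ, show k + 2 = (k+1)+1 from rfl]]
    simpa [blockL] using h3

lemma accepts_of_mem : ∀ w ∈ Lmix, MM.Accepts w := by
  rintro w ⟨n, rfl⟩
  cases n with
  | zero => exact ⟨(MQ.s0, []), .nil _, by simp [MM]⟩
  | succ n =>
    refine ⟨(MQ.sf, []), ?_, by simp [MM]⟩
    rw [List.replicate_succ, List.flatten_cons,
      show 2 * (n + 1) = 2 * n + 1 + 1 by ring]
    have h3 := stepsBlocks n 1 []
    refine .call (q' := MQ.s1) (γ := MG.bot) rfl (by simp [MM, mδc])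
      (.call (q' := MQ.s2) (γ := MG.z) rfl (by simp [MM, mδc])
      (.internal (q' := MQ.s3) rfl (by simp [MM, mδi]) ?_))
    simpa [blockL, List.replicate_succ] using h3

lemma mem_of_accepts : ∀ w, MM.Accepts w → w ∈ Lmix := by
  rintro w ⟨c, hs, hacc⟩
  have h := sound hs hacc
  simp only [Lang] at h
  rcases h with h | ⟨v, hv, rfl⟩
  · exact ⟨0, by simpa using h⟩
  · obtain ⟨j, u, hu, rfl⟩ := hv
    obtain ⟨u1, hu1, rfl⟩ := hu
    simp only [Bw, Set.mem_singleton_iff] at hu1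
    subst hu1
    refine ⟨j + 1, ?_⟩
    rw [List.replicate_succ, List.flatten_cons,
      show 2 * (j + 1) = 2 * j + 2 by ring, List.replicate_add]
    simp [blockL]

lemma part1 : IsVPL kindF2 Lmix := by
  refine ⟨MM, Set.ext fun w => ⟨accepts_of_mem w, mem_of_accepts w⟩⟩

/-! ### Reduced words and the free group -/

def enc : F2L → Bool × Bool
  | .a => (true, true)
  | .ai => (true, false)
  | .b => (false, true)
  | .bi => (false, false)

lemma projF2_append (u v : List F2L) : projF2 (u ++ v) = projF2 u * projF2 v := by
  simp [projF2]

lemma projF2_single : ∀ x : F2L, projF2 [x] = FreeGroup.mk [enc x] := by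
  intro x
  cases x
  · show FreeGroup.of true * 1 = _
    rw [mul_one]; rfl
  · show FreeGroup.of false * 1 = _
    rw [mul_one]; rfl
  · show (FreeGroup.of true)⁻¹ * 1 = _
    rw [mul_one, show FreeGroup.of true = FreeGroup.mk [(true, true)] from rfl,
      FreeGroup.inv_mk]; rfl
  · show (FreeGroup.of false)⁻¹ * 1 = _
    rw [mul_one, show FreeGroup.of false = FreeGroup.mk [(false, true)] from rfl,
      FreeGroup.inv_mk]; rfl

lemma projF2_eq_mk : ∀ w : List F2L, projF2 w = FreeGroup.mk (w.map enc) := by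
  intro w
  induction w with
  | nil => simp [projF2, FreeGroup.one_eq_mk]
  | cons x t ih =>
    rw [show x :: t = [x] ++ t from rfl, projF2_append, projF2_single, ih,
      FreeGroup.mul_mk]
    rfl

lemma reduce_self {α : Type} [DecidableEq α] :
    ∀ {L : List (α × Bool)}, List.Chain' (fun x y => ¬(x.1 = y.1 ∧ x.2 = !y.2)) L →
      FreeGroup.reduce L = L := by
  intro L
  induction L with
  | nil => intro _; rfl
  | cons x t ih =>
    intro h
    cases t with
    | nil => rfl
    | cons y t' =>
      obtain ⟨hxy, hc⟩ := List.isChain_cons_cons.mp h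
      rw [FreeGroup.reduce.cons, ih hc]
      simp [hxy]

lemma enc_inj : Function.Injective enc := by
  intro x y h
  cases x <;> cases y <;> simp [enc] at h ⊢

lemma reduced_chain {w : List F2L} (h : ReducedF2 w) :
    List.Chain' (fun x y : Bool × Bool => ¬(x.1 = y.1 ∧ x.2 = !y.2)) (w.map enc) := by
  refine (List.isChain_map enc).mpr ?_
  refine h.imp ?_
  intro x y hxy
  intro hcon
  apply hxy
  cases x <;> cases y <;> simp [enc] at hcon <;> rfl

lemma reduced_eq {w1 w2 : List F2L} (h1 : ReducedF2 w1) (h2 : ReducedF2 w2)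
    (h : projF2 w1 = projF2 w2) : w1 = w2 := by
  rw [projF2_eq_mk, projF2_eq_mk] at h
  have := congrArg FreeGroup.toWord h
  rw [FreeGroup.toWord_mk, FreeGroup.toWord_mk, reduce_self (reduced_chain h1),
    reduce_self (reduced_chain h2)] at this
  exact List.map_injective_iff.mpr enc_inj this

lemma projF2_repl_b (m : ℕ) :
    projF2 (List.replicate m F2L.b) = (FreeGroup.of false) ^ m := by
  induction m with
  | zero => simp [projF2]
  | succ m ih =>
    rw [List.replicate_succ, pow_succ']
    rw [show (List.replicate m F2L.b) = List.replicate m F2L.b from rfl] at ih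
    calc projF2 (F2L.b :: List.replicate m F2L.b)
        = FreeGroup.of false * projF2 (List.replicate m F2L.b) := by simp [projF2]
      _ = FreeGroup.of false * (FreeGroup.of false) ^ m := by rw [ih]

lemma projF2_repl_a (m : ℕ) :
    projF2 (List.replicate m F2L.a) = (FreeGroup.of true) ^ m := by
  induction m with
  | zero => simp [projF2]
  | succ m ih =>
    rw [List.replicate_succ, pow_succ']
    calc projF2 (F2L.a :: List.replicate m F2L.a)
        = FreeGroup.of true * projF2 (List.replicate m F2L.a) := by simp [projF2]
      _ = FreeGroup.of true * (FreeGroup.of true) ^ m := by rw [ih]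

lemma projF2_blocks (n : ℕ) :
    projF2 ((List.replicate n blockL).flatten) = (FreeGroup.of true) ^ n := by
  induction n with
  | zero => simp [projF2]
  | succ n ih =>
    rw [List.replicate_succ, List.flatten_cons, projF2_append, ih, pow_succ']
    congr 1
    simp [projF2, blockL]

lemma reduced_ab : ∀ w : List F2L, (∀ x ∈ w, x = F2L.a ∨ x = F2L.b) → ReducedF2 w := by
  intro w
  induction w with
  | nil => intro _; exact List.isChain_nil
  | cons x t ih =>
    intro h
    refine List.isChain_cons.mpr ⟨?_, ih fun y hy => h y (by simp [hy])⟩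
    intro y hy
    have hyt : y ∈ t := List.mem_of_mem_head? hy
    have h1 := h y (by simp [hyt])
    have h2 := h x (by simp)
    rcases h1 with rfl | rfl <;> rcases h2 with rfl | rfl <;> simp [invF2L]

lemma part2 : rLmix = {w | ∃ n : ℕ, w = List.replicate n F2L.a ++ List.replicate (2 * n) F2L.b} := by
  ext w
  constructor
  · rintro ⟨hred, u, ⟨n, rfl⟩, heq⟩
    refine ⟨n, ?_⟩
    have hproj : projF2 w =
        projF2 (List.replicate n F2L.a ++ List.replicate (2 * n) F2L.b) := by
      rw [← heq, projF2_append, projF2_append, projF2_blocks, projF2_repl_a,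
        projF2_repl_b]
    have hred2 : ReducedF2 (List.replicate n F2L.a ++ List.replicate (2 * n) F2L.b) := by
      apply reduced_ab
      intro x hx
      rcases List.mem_append.mp hx with h | h
      · exact Or.inl (List.eq_of_mem_replicate h)
      · exact Or.inr (List.eq_of_mem_replicate h)
    exact reduced_eq hred hred2 hproj
  · rintro ⟨n, rfl⟩
    refine ⟨?_, ?_⟩
    · apply reduced_ab
      intro x hx
      rcases List.mem_append.mp hx with h | h
      · exact Or.inl (List.eq_of_mem_replicate h)
      · exact Or.inr (List.eq_of_mem_replicate h)
    · refine ⟨(List.replicate n blockL).flatten ++ List.replicate (2 * n) F2L.b,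
        ⟨n, rfl⟩, ?_⟩
      rw [projF2_append, projF2_append, projF2_blocks, projF2_repl_a]

/-! ### Non-VPL-ness of `{aⁿ b^(2n)}` -/

lemma not_in_K {n m : ℕ} (hne : m ≠ 2 * n) :
    List.replicate n F2L.a ++ List.replicate m F2L.b ∉
      {w : List F2L | ∃ n : ℕ, w = List.replicate n F2L.a ++ List.replicate (2 * n) F2L.b} := by
  rintro ⟨n', h⟩
  have hca := congrArg (List.count F2L.a) h
  have hcb := congrArg (List.count F2L.b) h
  simp [List.count_append, List.count_replicate] at hca hcb
  omega

lemma part3 : ∀ kind : F2L → VKind,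
    ¬ IsVPL kind {w | ∃ n : ℕ, w = List.replicate n F2L.a ++ List.replicate (2 * n) F2L.b} := by
  intro kind ⟨M, hM⟩
  haveI : Fintype M.Q := M.finQ
  have hmem : ∀ n : ℕ, M.Accepts (List.replicate n F2L.a ++ List.replicate (2 * n) F2L.b) := by
    intro n
    have : (List.replicate n F2L.a ++ List.replicate (2 * n) F2L.b)
        ∈ {w : List F2L | ∃ n : ℕ, w = List.replicate n F2L.a ++ List.replicate (2 * n) F2L.b} :=
      ⟨n, rfl⟩
    rw [hM] at this
    exact this
  have hnmem : ∀ n m : ℕ, m ≠ 2 * n →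
      ¬ M.Accepts (List.replicate n F2L.a ++ List.replicate m F2L.b) := by
    intro n m hne hacc
    exact not_in_K hne (by rw [hM]; exact hacc)
  by_cases ha : kind F2L.a = .call
  · by_cases hb : kind F2L.b = .response
    · -- a call, b response: track empty-stack configurations after aⁿbⁿ
      set R : ℕ → Set M.Q := fun n =>
        {q | M.Steps (M.init, []) (List.replicate n F2L.a ++ List.replicate n F2L.b) (q, [])}
        with hR
      obtain ⟨n1, n2, hne, hfe⟩ := Finite.exists_ne_map_eq_of_infinite R
      -- decompose the accepting run of a^{n2} b^{2 n2}
      have hacc := hmem n2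
      obtain ⟨cf, hsf, hafin⟩ := hacc
      rw [show (2 : ℕ) * n2 = n2 + n2 by ring, List.replicate_add,
        ← List.append_assoc] at hsf
      obtain ⟨cm, h1, h2⟩ := VPA.steps_append hsf
      -- the stack of cm is empty
      obtain ⟨cm1, h1a, h1b⟩ := VPA.steps_append h1
      have hlen : cm1.2.length = n2 := by
        have := VPA.steps_push_exact (M := M) ha n2 h1a
        simpa using this
      have h1b' : M.Steps (cm1.1, cm1.2) (List.replicate n2 F2L.b) cm := h1b
      have hcm : cm.2 = [] := by
        have := VPA.steps_pop_exact (M := M) hb n2 (le_of_eq hlen.symm) h1b'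
        rw [this, List.drop_eq_nil_iff]
        omega
      have hq2 : cm.1 ∈ R n2 := by
        simp only [hR, Set.mem_setOf_eq]
        have : cm = (cm.1, []) := by
          ext
          · rfl
          · rw [hcm]
        rw [← this]
        exact h1
      have hq1 : cm.1 ∈ R n1 := by rw [hfe]; exact hq2
      -- now a^{n1} b^{n1 + n2} is accepted
      have : M.Accepts (List.replicate n1 F2L.a ++ List.replicate (n1 + n2) F2L.b) := by
        refine ⟨cf, ?_, hafin⟩
        have hcomp := VPA.steps_trans hq1 (by rw [← hcm]; exact h2)
        rw [List.append_assoc, ← List.replicate_add] at hcomp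
        exact hcomp
      exact hnmem n1 (n1 + n2) (by omega) this
    · -- a call, b not response: stack is never inspected while reading b's
      set R : ℕ → Set M.Q := fun n =>
        {q | ∃ s, M.Steps (M.init, []) (List.replicate n F2L.a) (q, s)} with hR
      obtain ⟨n1, n2, hne, hfe⟩ := Finite.exists_ne_map_eq_of_infinite R
      obtain ⟨cf, hsf, hafin⟩ := hmem n2
      obtain ⟨cm, h1, h2⟩ := VPA.steps_append hsf
      have hq2 : cm.1 ∈ R n2 := ⟨cm.2, by rw [show (cm.1, cm.2) = cm from rfl]; exact h1⟩
      have hq1 : cm.1 ∈ R n1 := by rw [hfe]; exact hq2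
      obtain ⟨s1, hs1⟩ := hq1
      obtain ⟨s', hs'⟩ := VPA.steps_of_noresp h2
        (fun x hx => by rw [List.eq_of_mem_replicate hx]; exact hb) s1
      have : M.Accepts (List.replicate n1 F2L.a ++ List.replicate (2 * n2) F2L.b) :=
        ⟨(cf.1, s'), VPA.steps_trans hs1 hs', hafin⟩
      exact hnmem n1 (2 * n2) (by omega) this
  · -- a not call: stack stays empty while reading a's
    set R : ℕ → Set M.Q := fun n =>
      {q | M.Steps (M.init, []) (List.replicate n F2L.a) (q, [])} with hR
    obtain ⟨n1, n2, hne, hfe⟩ := Finite.exists_ne_map_eq_of_infinite R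
    obtain ⟨cf, hsf, hafin⟩ := hmem n2
    obtain ⟨cm, h1, h2⟩ := VPA.steps_append hsf
    have hcm : cm.2 = [] :=
      VPA.steps_empty_of_nocall h1
        (fun x hx => by rw [List.eq_of_mem_replicate hx]; exact ha) rfl
    have hq2 : cm.1 ∈ R n2 := by
      simp only [hR, Set.mem_setOf_eq]
      have : cm = (cm.1, []) := by
        ext
        · rfl
        · rw [hcm]
      rw [← this]
      exact h1
    have hq1 : cm.1 ∈ R n1 := by rw [hfe]; exact hq2
    have hcm' : cm = (cm.1, []) := by
      ext
      · rfl
      · rw [hcm]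
    have : M.Accepts (List.replicate n1 F2L.a ++ List.replicate (2 * n2) F2L.b) :=
      ⟨cf, VPA.steps_trans hq1 (by rw [← hcm']; exact h2), hafin⟩
    exact hnmem n1 (2 * n2) (by omega) this

end FRaux

/-- In F₂, the language {(aaa⁻¹)ⁿb^(2n)} is a VPL for the partition
Σ_c = {a}, Σ_i = {a⁻¹, b⁻¹}, Σ_r = {b}, but its set of reduced
representatives, {aⁿb^(2n)}, is not a VPL for any partition. -/
theorem freeReduction_not_preserve_VPL :
    IsVPL kindF2 Lmix ∧
    rLmix = {w | ∃ n : ℕ, w = List.replicate n F2L.a ++ List.replicate (2 * n) F2L.b} ∧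
    (∀ kind : F2L → VKind, ¬ IsVPL kind rLmix) := by
  exact ⟨FRaux.part1, FRaux.part2, by
    intro kind
    rw [FRaux.part2]
    exact FRaux.part3 kind⟩
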